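/- Let a and b be nonzero integers, n a positive integer such that aj + b ≠ 0 for every integer j with 1 ≤ j ≤ n, m a nonzero complex number, and k a positive integer. Writing HP_{r}(n) = ∑_{j=1}^{n} 1/(aj+b)^{r}, one has ∑_{j=1}^{n} (1/(aj+b)^{2k})·sin(2π(aj+b)/m) = -(1/(2b^{2k}))( sin(2πb/m) - ∑_{j=0}^{k-1} (-1)^{j}(2πb/m)^{2j+1}/(2j+1)! ) + (1/(2(an+b)^{2k}))( sin(2π(an+b)/m) - ∑_{j=0}^{k-1} (-1)^{j}(2π(an+b)/m)^{2j+1}/(2j+1)! ) - ∑_{j=0}^{k-1} ((-1)^{k-j}(2π/m)^{2k-1-2j}/(2k-1-2j)!)·HP_{2j+1}(n) - ((-1)^{k}(2π/m)^{2k}/(2(2k-1)!)) ∫_{0}^{1} (1-u)^{2k-1}·( cos(2π(an+b)u/m) - cos(2πbu/m) )·cot(πau/m) du. -/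

import Mathlib

open Real Complex intervalIntegral MeasureTheory

noncomputable def Sint (x : ℂ) (n : ℕ) : ℂ := ∫ u in (0:ℝ)..1, (1 - (u:ℂ))^n * Complex.sin (x*u)
noncomputable def Cint (x : ℂ) (n : ℕ) : ℂ := ∫ u in (0:ℝ)..1, (1 - (u:ℂ))^n * Complex.cos (x*u)

lemma hd_base (u : ℝ) : HasDerivAt (fun u:ℝ => (1 - (u:ℂ))) (-1) u := by
  have h1 : HasDerivAt (fun y:ℝ => (y:ℂ)) 1 u := by
    simpa using HasDerivAt.ofReal_comp (f := fun y:ℝ => y) (u := 1) (hasDerivAt_id u)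
  simpa using h1.const_sub (1:ℂ)

lemma hd_pow (n : ℕ) (u : ℝ) :
    HasDerivAt (fun u:ℝ => (1 - (u:ℂ))^n) (-(n:ℂ) * (1 - (u:ℂ))^(n-1)) u := by
  have h2 := HasDerivAt.comp (𝕜:=ℝ) u (hasDerivAt_pow n (1-(u:ℂ))) (hd_base u)
  refine h2.congr_deriv ?_
  ring

lemma hd_sin (x : ℂ) (u : ℝ) :
    HasDerivAt (fun u:ℝ => Complex.sin (x*u)) (x * Complex.cos (x*u)) u := by
  have h1 : HasDerivAt (fun z:ℂ => Complex.sin (x*z)) (x * Complex.cos (x*(u:ℂ))) (u:ℂ) := by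
    refine ((Complex.hasDerivAt_sin (x*(u:ℂ))).comp (u:ℂ)
      ((hasDerivAt_id (u:ℂ)).const_mul x)).congr_deriv (by ring)
  exact h1.comp_ofReal

lemma hd_cos (x : ℂ) (u : ℝ) :
    HasDerivAt (fun u:ℝ => Complex.cos (x*u)) (-(x * Complex.sin (x*u))) u := by
  have h1 : HasDerivAt (fun z:ℂ => Complex.cos (x*z)) (-(x * Complex.sin (x*(u:ℂ)))) (u:ℂ) := by
    have := (Complex.hasDerivAt_cos (x*(u:ℂ))).comp (u:ℂ) ((hasDerivAt_id (u:ℂ)).const_mul x)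
    refine this.congr_deriv ?_; ring
  exact h1.comp_ofReal

lemma cont_s (x : ℂ) (n : ℕ) : Continuous fun u:ℝ => (1 - (u:ℂ))^n * Complex.sin (x*u) := by
  fun_prop

lemma cont_c (x : ℂ) (n : ℕ) : Continuous fun u:ℝ => (1 - (u:ℂ))^n * Complex.cos (x*u) := by
  fun_prop

lemma relA (x : ℂ) (n : ℕ) : (-1 : ℂ) = (-(n:ℂ)-1) * Cint x n + (-x) * Sint x (n+1) := by
  have key := integral_eq_sub_of_hasDerivAt (a := (0:ℝ)) (b := 1)
    (f := fun u:ℝ => (1 - (u:ℂ))^(n+1) * Complex.cos (x*u))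
    (f' := fun u:ℝ => (-(n:ℂ)-1) * ((1 - (u:ℂ))^n * Complex.cos (x*u)) +
        (-x) * ((1 - (u:ℂ))^(n+1) * Complex.sin (x*u)))
    (by
      intro u _
      have := (hd_pow (n+1) u).mul (hd_cos x u)
      refine this.congr_deriv ?_
      simp only [Nat.add_sub_cancel]
      push_cast
      ring)
    (((continuous_const.mul (cont_c x n)).add
      (continuous_const.mul (cont_s x (n+1)))).intervalIntegrable 0 1)
  rw [intervalIntegral.integral_add (((cont_c x n).intervalIntegrable 0 1).const_mul _)
      (((cont_s x (n+1)).intervalIntegrable 0 1).const_mul _),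
    intervalIntegral.integral_const_mul, intervalIntegral.integral_const_mul] at key
  rw [show Cint x n = ∫ u in (0:ℝ)..1, (1 - (u:ℂ))^n * Complex.cos (x*u) from rfl,
      show Sint x (n+1) = ∫ u in (0:ℝ)..1, (1 - (u:ℂ))^(n+1) * Complex.sin (x*u) from rfl]
  rw [key]; norm_num

lemma relB (x : ℂ) (n : ℕ) : (0 : ℂ) = (-(n:ℂ)-1) * Sint x n + x * Cint x (n+1) := by
  have key := integral_eq_sub_of_hasDerivAt (a := (0:ℝ)) (b := 1)
    (f := fun u:ℝ => (1 - (u:ℂ))^(n+1) * Complex.sin (x*u))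
    (f' := fun u:ℝ => (-(n:ℂ)-1) * ((1 - (u:ℂ))^n * Complex.sin (x*u)) +
        x * ((1 - (u:ℂ))^(n+1) * Complex.cos (x*u)))
    (by
      intro u _
      have := (hd_pow (n+1) u).mul (hd_sin x u)
      refine this.congr_deriv ?_
      simp only [Nat.add_sub_cancel]
      push_cast
      ring)
    (((continuous_const.mul (cont_s x n)).add
      (continuous_const.mul (cont_c x (n+1)))).intervalIntegrable 0 1)
  rw [intervalIntegral.integral_add (((cont_s x n).intervalIntegrable 0 1).const_mul _)
      (((cont_c x (n+1)).intervalIntegrable 0 1).const_mul _),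
    intervalIntegral.integral_const_mul, intervalIntegral.integral_const_mul] at key
  rw [show Sint x n = ∫ u in (0:ℝ)..1, (1 - (u:ℂ))^n * Complex.sin (x*u) from rfl,
      show Cint x (n+1) = ∫ u in (0:ℝ)..1, (1 - (u:ℂ))^(n+1) * Complex.cos (x*u) from rfl]
  rw [key]; norm_num

lemma relC (x : ℂ) : Complex.sin x = x * Cint x 0 := by
  have key := integral_eq_sub_of_hasDerivAt (a := (0:ℝ)) (b := 1)
    (f := fun u:ℝ => Complex.sin (x*u))
    (f' := fun u:ℝ => x * ((1 - (u:ℂ))^0 * Complex.cos (x*u)))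
    (by
      intro u _
      have h1 : HasDerivAt (fun u:ℝ => Complex.sin (x*u)) (x * Complex.cos (x*u)) u := by
        have := (Complex.hasDerivAt_sin (x*(u:ℂ))).comp (u:ℂ) ((hasDerivAt_id (u:ℂ)).const_mul x)
        simpa [mul_comm] using this.comp_ofReal
      simpa using h1)
    ((continuous_const.mul (cont_c x 0)).intervalIntegrable 0 1)
  rw [intervalIntegral.integral_const_mul] at key
  rw [show Cint x 0 = ∫ u in (0:ℝ)..1, (1 - (u:ℂ))^0 * Complex.cos (x*u) from rfl, key]
  simp

lemma srec (x : ℂ) (k : ℕ) (hk : 1 ≤ k) :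
    x^2 * Sint x (2*k+1) = x - ((2*k+1) * (2*k) : ℂ) * Sint x (2*k-1) := by
  have hA := relA x (2*k)
  have hB := relB x (2*k-1)
  have h1 : 2*k-1+1 = 2*k := by omega
  rw [h1] at hB
  have hc : ((2*k-1 : ℕ) : ℂ) = 2*(k:ℂ) - 1 := by
    push_cast [Nat.cast_sub (by omega : 1 ≤ 2*k)]; ring
  rw [hc] at hB
  -- from hB : 0 = (-(2k-1)-1) S_{2k-1} + x C_{2k}, so x C_{2k} = 2k S_{2k-1}
  have h2 : x * Cint x (2*k) = (2*(k:ℂ)) * Sint x (2*k-1) := by linear_combination -hB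
  -- hA : -1 = (-(2k)-1) C_{2k} - x S_{2k+1}
  have h3 : x * Sint x (2*k+1) = 1 - ((2*(k:ℂ))+1) * Cint x (2*k) := by
    push_cast at hA; linear_combination hA
  calc x^2 * Sint x (2*k+1) = x * (x * Sint x (2*k+1)) := by ring
    _ = x * (1 - ((2*(k:ℂ))+1) * Cint x (2*k)) := by rw [h3]
    _ = x - ((2*(k:ℂ))+1) * (x * Cint x (2*k)) := by ring
    _ = x - ((2*k+1) * (2*k) : ℂ) * Sint x (2*k-1) := by rw [h2]; ring

lemma taylor_sin (x : ℂ) : ∀ k : ℕ, 1 ≤ k →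
    Complex.sin x = (∑ j ∈ Finset.range k, (-1:ℂ)^j * x^(2*j+1) / (Nat.factorial (2*j+1)))
      + (-1:ℂ)^k * x^(2*k) / (Nat.factorial (2*k-1)) * Sint x (2*k-1) := by
  intro k hk
  induction k, hk using Nat.le_induction with
  | base =>
    have hA := relA x 0
    have hC := relC x
    have h1 : x^2 * Sint x 1 = x - Complex.sin x := by
      have : x * Sint x 1 = 1 - Cint x 0 := by push_cast at hA; linear_combination hA
      calc x^2 * Sint x 1 = x * (x * Sint x 1) := by ring
        _ = x * (1 - Cint x 0) := by rw [this]
        _ = x - x * Cint x 0 := by ring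
        _ = x - Complex.sin x := by rw [← hC]
    simp only [Finset.sum_range_one]
    norm_num [Nat.factorial]
    linear_combination h1
  | succ k hk ih =>
    obtain ⟨l, rfl⟩ : ∃ l, k = l + 1 := ⟨k - 1, by omega⟩
    rw [Finset.sum_range_succ, ih]
    have hs := srec x (l+1) (by omega)
    have e1 : 2*(l+1)-1 = 2*l+1 := by omega
    have e2 : 2*(l+1+1)-1 = 2*(l+1)+1 := by omega
    rw [e1] at hs ⊢
    rw [e2]
    have hf : (((2*(l+1)+1).factorial : ℕ) : ℂ)
        = ((2*(l+1)+1 : ℕ) : ℂ) * ((2*(l+1) : ℕ) : ℂ) * (((2*l+1).factorial : ℕ) : ℂ) := by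
      have h3 : 2*(l+1)+1 = (2*l+1)+1+1 := by omega
      rw [h3, Nat.factorial_succ, Nat.factorial_succ]
      push_cast; ring
    have hne1 : (((2*l+1).factorial : ℕ) : ℂ) ≠ 0 :=
      Nat.cast_ne_zero.mpr (Nat.factorial_ne_zero _)
    have hne2 : (((2*(l+1)+1).factorial : ℕ) : ℂ) ≠ 0 :=
      Nat.cast_ne_zero.mpr (Nat.factorial_ne_zero _)
    push_cast at hs hf
    have hx : ((2*(l+1)+1 : ℂ)) * ((2*(l+1):ℂ)) * Sint x (2*l+1)
        = x - x^2 * Sint x (2*(l+1)+1) := by push_cast; linear_combination hs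
    have key : (-1:ℂ)^(l+1) * x^(2*(l+1)) / (((2*l+1).factorial : ℕ) : ℂ) * Sint x (2*l+1)
        = (-1:ℂ)^(l+1) * x^(2*(l+1)+1) / (((2*(l+1)+1).factorial : ℕ) : ℂ)
          + (-1:ℂ)^(l+1+1) * x^(2*(l+1+1)) / (((2*(l+1)+1).factorial : ℕ) : ℂ)
            * Sint x (2*(l+1)+1) := by
      rw [hf]
      have c1 : (2 * ((l:ℂ) + 1) + 1) ≠ 0 := by
        intro hc
        have h0 : ((2*(l+1)+1 : ℕ) : ℂ) = 0 := by push_cast; linear_combination hc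
        rw [Nat.cast_eq_zero] at h0; omega
      have c2 : (2 * ((l:ℂ) + 1)) ≠ 0 := by
        intro hc
        have h0 : ((2*(l+1) : ℕ) : ℂ) = 0 := by push_cast; linear_combination hc
        rw [Nat.cast_eq_zero] at h0; omega
      push_cast
      field_simp
      linear_combination ((-1:ℂ)^(l+1) * x^(2*(l+1))) * hx
    linear_combination key

lemma sum_sin_ap (z θ : ℂ) (hz : Complex.sin z ≠ 0) (n : ℕ) :
    ∑ j ∈ Finset.Icc 1 n, Complex.sin (θ + 2*(j:ℂ)*z)
      = (Complex.cos θ - Complex.cos (θ + 2*(n:ℂ)*z)) * (Complex.cos z / Complex.sin z) / 2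
        + (Complex.sin (θ + 2*(n:ℂ)*z) - Complex.sin θ) / 2 := by
  induction n with
  | zero => simp
  | succ n ih =>
    rw [Finset.sum_Icc_succ_top (by omega), ih]
    push_cast
    rw [show θ + 2*((n:ℂ)+1)*z = (θ + 2*(n:ℂ)*z) + 2*z by ring]
    set α := θ + 2*(n:ℂ)*z with hα
    rw [Complex.sin_add α (2*z), Complex.cos_add α (2*z), Complex.sin_two_mul,
      Complex.cos_two_mul]
    have hp := Complex.sin_sq_add_cos_sq z
    field_simp
    linear_combination (2 * Complex.cos α * Complex.cos z) * hp


lemma ae_sin_ne (a : ℤ) (m : ℂ) (ha : a ≠ 0) (hm : m ≠ 0) :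
    ∀ᵐ u : ℝ, Complex.sin ((π:ℂ) * a * u / m) ≠ 0 := by
  have hπ : ((π:ℝ) : ℂ) ≠ 0 := Complex.ofReal_ne_zero.mpr Real.pi_ne_zero
  have ha' : ((a:ℤ) : ℂ) ≠ 0 := Int.cast_ne_zero.mpr ha
  have hcount : {u : ℝ | Complex.sin ((π:ℂ) * a * u / m) = 0}.Countable := by
    apply Set.Countable.mono _ (Set.countable_range (fun q : ℤ => ((q * m / a : ℂ)).re))
    intro u hu
    simp only [Set.mem_setOf_eq] at hu
    rw [Complex.sin_eq_zero_iff] at hu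
    obtain ⟨q, hq⟩ := hu
    refine ⟨q, ?_⟩
    have hu' : (u:ℂ) = q * m / a := by
      field_simp at hq
      have h2 : (a:ℂ) * u = q * m := by
        apply mul_left_cancel₀ hπ
        linear_combination (π:ℂ) * hq
      rw [eq_div_iff ha']
      linear_combination h2
    show ((q:ℂ) * m / a).re = u
    rw [← hu', Complex.ofReal_re]
  have h0 := hcount.measure_zero (volume : Measure ℝ)
  rw [MeasureTheory.measure_eq_zero_iff_ae_notMem] at h0
  filter_upwards [h0] with u hu
  exact hu

lemma perterm (m : ℂ) (hm : m ≠ 0) (k : ℕ) (hk : 0 < k) (c : ℂ) (hc : c ≠ 0) :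
    1 / c^(2*k) * Complex.sin (2 * (π:ℂ) * c / m)
      = (∑ i ∈ Finset.range k,
          (-(-1:ℂ)^(k-i) * (2*(π:ℂ)/m)^(2*k-1-2*i) / (Nat.factorial (2*k-1-2*i)))
            * (1/c^(2*i+1)))
        + (-1:ℂ)^k * (2*(π:ℂ)/m)^(2*k) / (Nat.factorial (2*k-1))
            * Sint (2*(π:ℂ)*c/m) (2*k-1) := by
  have ht := taylor_sin (2*(π:ℂ)*c/m) k hk
  rw [ht, mul_add, Finset.mul_sum]
  congr 1
  · rw [← Finset.sum_range_reflect (fun i =>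
      (-(-1:ℂ)^(k-i) * (2*(π:ℂ)/m)^(2*k-1-2*i) / (Nat.factorial (2*k-1-2*i))) * (1/c^(2*i+1))) k]
    apply Finset.sum_congr rfl
    intro j hj
    rw [Finset.mem_range] at hj
    rw [show k-(k-1-j) = j+1 by omega, show 2*k-1-2*(k-1-j) = 2*j+1 by omega,
      show 2*(k-1-j)+1 = 2*k-(2*j+1) by omega]
    have hp1 : (2*(π:ℂ)*c/m)^(2*j+1) = (2*(π:ℂ)/m)^(2*j+1) * c^(2*j+1) := by
      rw [show 2*(π:ℂ)*c/m = (2*(π:ℂ)/m)*c by ring, mul_pow]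
    have hne : c^(2*k-(2*j+1)) ≠ 0 := pow_ne_zero _ hc
    have hne2 : c^(2*k) ≠ 0 := pow_ne_zero _ hc
    have e : (1:ℂ)/c^(2*k-(2*j+1)) = c^(2*j+1)/c^(2*k) := by
      rw [div_eq_div_iff hne hne2, ← pow_add, one_mul]
      congr 1; omega
    rw [hp1, e]
    ring
  · have hp1 : (2*(π:ℂ)*c/m)^(2*k) = (2*(π:ℂ)/m)^(2*k) * c^(2*k) := by
      rw [show 2*(π:ℂ)*c/m = (2*(π:ℂ)/m)*c by ring, mul_pow]
    rw [hp1]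
    have hne : c^(2*k) ≠ 0 := pow_ne_zero _ hc
    calc 1/c^(2*k) * ((-1:ℂ)^k * ((2*(π:ℂ)/m)^(2*k) * c^(2*k)) / (Nat.factorial (2*k-1))
            * Sint (2*(π:ℂ)*c/m) (2*k-1))
        = ((-1:ℂ)^k * (2*(π:ℂ)/m)^(2*k) / (Nat.factorial (2*k-1))
            * Sint (2*(π:ℂ)*c/m) (2*k-1)) * (c^(2*k) * (1/c^(2*k))) := by ring
      _ = _ := by rw [mul_one_div_cancel hne, mul_one]


set_option maxHeartbeats 1000000 in
theorem stmt_17 (a b : ℤ) (ha : a ≠ 0) (hb : b ≠ 0) (n : ℕ) (hn : 0 < n)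
    (h : ∀ j : ℤ, 1 ≤ j → j ≤ n → a * j + b ≠ 0) (m : ℂ) (hm : m ≠ 0)
    (k : ℕ) (hk : 0 < k) :
    ∑ j ∈ Finset.Icc 1 n,
        (1 : ℂ) / (a * j + b) ^ (2 * k) *
          Complex.sin (2 * π * ((a : ℂ) * j + b) / m) =
      -(1 / (2 * (b : ℂ) ^ (2 * k))) *
          (Complex.sin (2 * π * (b : ℂ) / m) -
            ∑ j ∈ Finset.range k,
              (-1 : ℂ) ^ j * (2 * π * (b : ℂ) / m) ^ (2 * j + 1) /
                (Nat.factorial (2 * j + 1)))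
      + (1 / (2 * ((a : ℂ) * n + b) ^ (2 * k))) *
          (Complex.sin (2 * π * ((a : ℂ) * n + b) / m) -
            ∑ j ∈ Finset.range k,
              (-1 : ℂ) ^ j * (2 * π * ((a : ℂ) * n + b) / m) ^ (2 * j + 1) /
                (Nat.factorial (2 * j + 1)))
      - (∑ j ∈ Finset.range k,
          ((-1 : ℂ) ^ (k - j) * (2 * π / m) ^ (2 * k - 1 - 2 * j) /
              (Nat.factorial (2 * k - 1 - 2 * j))) *
            ∑ i ∈ Finset.Icc 1 n, (1 : ℂ) / (a * i + b) ^ (2 * j + 1))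
      - ((-1 : ℂ) ^ k * (2 * π / m) ^ (2 * k) / (2 * (Nat.factorial (2 * k - 1)))) *
          ∫ u in (0:ℝ)..1,
            (1 - (u : ℂ)) ^ (2 * k - 1) *
              (Complex.cos (2 * π * ((a : ℂ) * n + b) * u / m)
                - Complex.cos (2 * π * (b : ℂ) * u / m)) *
              Complex.cot (π * (a : ℂ) * u / m) := by
  have hbC : ((b : ℤ) : ℂ) ≠ 0 := Int.cast_ne_zero.mpr hb
  have hcj : ∀ j : ℕ, 1 ≤ j → j ≤ n → ((a:ℂ) * j + b) ≠ 0 := by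
    intro j h1 h2 heq
    apply h j (by exact_mod_cast h1) (by exact_mod_cast h2)
    have h0 : ((a * (j:ℤ) + b : ℤ) : ℂ) = 0 := by push_cast; push_cast at heq; exact heq
    exact_mod_cast h0
  have hX : ((a:ℂ) * n + b) ≠ 0 := hcj n hn le_rfl
  -- Step 1: expand LHS via perterm
  have hLHS : ∑ j ∈ Finset.Icc 1 n,
        (1 : ℂ) / (a * j + b) ^ (2 * k) * Complex.sin (2 * π * ((a : ℂ) * j + b) / m)
      = (∑ i ∈ Finset.range k,
          (-(-1:ℂ)^(k-i) * (2*(π:ℂ)/m)^(2*k-1-2*i) / (Nat.factorial (2*k-1-2*i)))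
            * ∑ j ∈ Finset.Icc 1 n, 1/((a:ℂ)*j+b)^(2*i+1))
        + ((-1:ℂ)^k * (2*(π:ℂ)/m)^(2*k) / (Nat.factorial (2*k-1)))
            * ∑ j ∈ Finset.Icc 1 n, Sint (2*(π:ℂ)*((a:ℂ)*j+b)/m) (2*k-1) := by
    rw [Finset.mul_sum]
    rw [show (∑ j ∈ Finset.Icc 1 n,
        (1 : ℂ) / (a * j + b) ^ (2 * k) * Complex.sin (2 * π * ((a : ℂ) * j + b) / m))
      = ∑ j ∈ Finset.Icc 1 n,
          ((∑ i ∈ Finset.range k,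
            (-(-1:ℂ)^(k-i) * (2*(π:ℂ)/m)^(2*k-1-2*i) / (Nat.factorial (2*k-1-2*i)))
              * (1/((a:ℂ)*j+b)^(2*i+1)))
          + ((-1:ℂ)^k * (2*(π:ℂ)/m)^(2*k) / (Nat.factorial (2*k-1)))
              * Sint (2*(π:ℂ)*((a:ℂ)*j+b)/m) (2*k-1)) from
      Finset.sum_congr rfl fun j hj => by
        rw [Finset.mem_Icc] at hj
        exact perterm m hm k hk _ (hcj j hj.1 hj.2)]
    rw [Finset.sum_add_distrib]
    congr 1
    rw [Finset.sum_comm]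
    exact Finset.sum_congr rfl fun i _ => (Finset.mul_sum _ _ _).symm
  rw [hLHS]
  -- Step 2: Taylor for the two boundary terms
  have h2 : Complex.sin (2 * π * (b : ℂ) / m) -
        ∑ j ∈ Finset.range k,
          (-1 : ℂ) ^ j * (2 * π * (b : ℂ) / m) ^ (2 * j + 1) / (Nat.factorial (2 * j + 1))
      = ((-1:ℂ)^k * (2*(π:ℂ)/m)^(2*k) / (Nat.factorial (2*k-1))) * (b:ℂ)^(2*k)
        * Sint (2*(π:ℂ)*(b:ℂ)/m) (2*k-1) := by
    rw [taylor_sin (2*(π:ℂ)*(b:ℂ)/m) k hk]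
    have hp : (2*(π:ℂ)*(b:ℂ)/m)^(2*k) = (2*(π:ℂ)/m)^(2*k) * (b:ℂ)^(2*k) := by
      rw [show 2*(π:ℂ)*(b:ℂ)/m = (2*(π:ℂ)/m)*(b:ℂ) by ring, mul_pow]
    linear_combination ((-1:ℂ)^k / ((Nat.factorial (2*k-1)) : ℂ)
      * Sint (2*(π:ℂ)*(b:ℂ)/m) (2*k-1)) * hp
  have h3 : Complex.sin (2 * π * ((a : ℂ) * n + b) / m) -
        ∑ j ∈ Finset.range k,
          (-1 : ℂ) ^ j * (2 * π * ((a : ℂ) * n + b) / m) ^ (2 * j + 1) /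
            (Nat.factorial (2 * j + 1))
      = ((-1:ℂ)^k * (2*(π:ℂ)/m)^(2*k) / (Nat.factorial (2*k-1))) * ((a:ℂ)*n+b)^(2*k)
        * Sint (2*(π:ℂ)*((a:ℂ)*n+b)/m) (2*k-1) := by
    rw [taylor_sin (2*(π:ℂ)*((a:ℂ)*n+b)/m) k hk]
    have hp : (2*(π:ℂ)*((a:ℂ)*n+b)/m)^(2*k)
        = (2*(π:ℂ)/m)^(2*k) * ((a:ℂ)*n+b)^(2*k) := by
      rw [show 2*(π:ℂ)*((a:ℂ)*n+b)/m = (2*(π:ℂ)/m)*((a:ℂ)*n+b) by ring, mul_pow]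
    linear_combination ((-1:ℂ)^k / ((Nat.factorial (2*k-1)) : ℂ)
      * Sint (2*(π:ℂ)*((a:ℂ)*n+b)/m) (2*k-1)) * hp
  rw [h2, h3]
  -- Step 3: the integral
  have hI : (∫ u in (0:ℝ)..1,
        (1 - (u : ℂ)) ^ (2 * k - 1) *
          (Complex.cos (2 * π * ((a : ℂ) * n + b) * u / m)
            - Complex.cos (2 * π * (b : ℂ) * u / m)) *
          Complex.cot (π * (a : ℂ) * u / m))
      = -2 * (∑ j ∈ Finset.Icc 1 n, Sint (2*(π:ℂ)*((a:ℂ)*j+b)/m) (2*k-1))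
        + (Sint (2*(π:ℂ)*((a:ℂ)*n+b)/m) (2*k-1) - Sint (2*(π:ℂ)*(b:ℂ)/m) (2*k-1)) := by
    have hstep1 : (∫ u in (0:ℝ)..1,
        (1 - (u : ℂ)) ^ (2 * k - 1) *
          (Complex.cos (2 * π * ((a : ℂ) * n + b) * u / m)
            - Complex.cos (2 * π * (b : ℂ) * u / m)) *
          Complex.cot (π * (a : ℂ) * u / m))
      = ∫ u in (0:ℝ)..1,
          ((-2:ℂ) * ∑ j ∈ Finset.Icc 1 n,
              (1 - (u:ℂ))^(2*k-1) * Complex.sin ((2*(π:ℂ)*((a:ℂ)*j+b)/m) * u)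
            + ((1 - (u:ℂ))^(2*k-1) * Complex.sin ((2*(π:ℂ)*((a:ℂ)*n+b)/m) * u)
              - (1 - (u:ℂ))^(2*k-1) * Complex.sin ((2*(π:ℂ)*(b:ℂ)/m) * u))) := by
      apply intervalIntegral.integral_congr_ae
      filter_upwards [ae_sin_ne a m ha hm] with u hz _
      have hsum := sum_sin_ap ((π:ℂ)*(a:ℂ)*(u:ℂ)/m) (2*(π:ℂ)*(b:ℂ)*(u:ℂ)/m) hz n
      have e1 : ∀ j : ℕ, 2*(π:ℂ)*(b:ℂ)*(u:ℂ)/m + 2*(j:ℂ)*((π:ℂ)*(a:ℂ)*(u:ℂ)/m)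
          = (2*(π:ℂ)*((a:ℂ)*j+b)/m) * (u:ℂ) := fun j => by ring
      simp only [e1] at hsum
      have e3 : 2*(π:ℂ)*(b:ℂ)*(u:ℂ)/m = (2*(π:ℂ)*(b:ℂ)/m) * (u:ℂ) := by ring
      rw [e3] at hsum
      rw [show (2 * (π:ℂ) * ((a : ℂ) * n + b) * u / m)
          = (2*(π:ℂ)*((a:ℂ)*n+b)/m) * (u:ℂ) by ring,
        show (2 * (π:ℂ) * (b : ℂ) * u / m) = (2*(π:ℂ)*(b:ℂ)/m) * (u:ℂ) by ring,
        Complex.cot_eq_cos_div_sin, ← Finset.mul_sum]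
      linear_combination (2*(1-(u:ℂ))^(2*k-1)) * hsum
    rw [hstep1]
    rw [intervalIntegral.integral_add
        (((continuous_finset_sum _ fun j _ => cont_s _ _).intervalIntegrable 0 1).const_mul _)
        (((cont_s _ _).intervalIntegrable 0 1).sub ((cont_s _ _).intervalIntegrable 0 1)),
      intervalIntegral.integral_const_mul,
      intervalIntegral.integral_sub ((cont_s _ _).intervalIntegrable 0 1)
        ((cont_s _ _).intervalIntegrable 0 1),
      intervalIntegral.integral_finset_sum
        (fun j _ => (cont_s _ _).intervalIntegrable 0 1)]
    rfl
  rw [hI]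
  -- Step 4: match the harmonic-sum term
  have h4 : (∑ j ∈ Finset.range k,
        ((-1 : ℂ) ^ (k - j) * (2 * (π:ℂ) / m) ^ (2 * k - 1 - 2 * j) /
            (Nat.factorial (2 * k - 1 - 2 * j))) *
          ∑ i ∈ Finset.Icc 1 n, (1 : ℂ) / (a * i + b) ^ (2 * j + 1))
      = -∑ i ∈ Finset.range k,
          (-(-1:ℂ)^(k-i) * (2*(π:ℂ)/m)^(2*k-1-2*i) / (Nat.factorial (2*k-1-2*i)))
            * ∑ j ∈ Finset.Icc 1 n, 1/((a:ℂ)*j+b)^(2*i+1) := by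
    rw [← Finset.sum_neg_distrib]
    exact Finset.sum_congr rfl fun i _ => by ring
  rw [h4]
  -- Step 5: final algebra
  have hbp : ((b:ℂ))^(2*k) ≠ 0 := pow_ne_zero _ hbC
  have hXp : ((a:ℂ)*n+b)^(2*k) ≠ 0 := pow_ne_zero _ hX
  have e5 : -(1 / (2 * (b : ℂ) ^ (2 * k))) *
      (((-1:ℂ)^k * (2*(π:ℂ)/m)^(2*k) / (Nat.factorial (2*k-1))) * (b:ℂ)^(2*k)
        * Sint (2*(π:ℂ)*(b:ℂ)/m) (2*k-1))
      = -(((-1:ℂ)^k * (2*(π:ℂ)/m)^(2*k) / (Nat.factorial (2*k-1)))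
          * Sint (2*(π:ℂ)*(b:ℂ)/m) (2*k-1)) / 2 := by
    rw [show -(1 / (2 * (b : ℂ) ^ (2 * k))) *
      (((-1:ℂ)^k * (2*(π:ℂ)/m)^(2*k) / (Nat.factorial (2*k-1))) * (b:ℂ)^(2*k)
        * Sint (2*(π:ℂ)*(b:ℂ)/m) (2*k-1))
      = -(((-1:ℂ)^k * (2*(π:ℂ)/m)^(2*k) / (Nat.factorial (2*k-1)))
          * Sint (2*(π:ℂ)*(b:ℂ)/m) (2*k-1)) / 2 * ((b:ℂ)^(2*k) * (1/(b:ℂ)^(2*k))) by ring,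
      mul_one_div_cancel hbp, mul_one]
  have e6 : (1 / (2 * ((a:ℂ)*n+b) ^ (2 * k))) *
      (((-1:ℂ)^k * (2*(π:ℂ)/m)^(2*k) / (Nat.factorial (2*k-1))) * ((a:ℂ)*n+b)^(2*k)
        * Sint (2*(π:ℂ)*((a:ℂ)*n+b)/m) (2*k-1))
      = (((-1:ℂ)^k * (2*(π:ℂ)/m)^(2*k) / (Nat.factorial (2*k-1)))
          * Sint (2*(π:ℂ)*((a:ℂ)*n+b)/m) (2*k-1)) / 2 := by
    rw [show (1 / (2 * ((a:ℂ)*n+b) ^ (2 * k))) *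
      (((-1:ℂ)^k * (2*(π:ℂ)/m)^(2*k) / (Nat.factorial (2*k-1))) * ((a:ℂ)*n+b)^(2*k)
        * Sint (2*(π:ℂ)*((a:ℂ)*n+b)/m) (2*k-1))
      = (((-1:ℂ)^k * (2*(π:ℂ)/m)^(2*k) / (Nat.factorial (2*k-1)))
          * Sint (2*(π:ℂ)*((a:ℂ)*n+b)/m) (2*k-1)) / 2 * (((a:ℂ)*n+b)^(2*k) * (1/((a:ℂ)*n+b)^(2*k))) by ring,
      mul_one_div_cancel hXp, mul_one]
  rw [e5, e6]
  ring
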